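/- Let F be a finite field of odd cardinality q. Then the group PSL₂(F) has cardinality q(q² − 1)/2. -/

import Mathlib

open Matrix MatrixGroups

section aux

variable (F : Type*) [Field F] [Fintype F]

/-- Equivalence between SL₂ and the kernel of det on GL₂. -/
def slEquivKer : SpecialLinearGroup (Fin 2) F ≃
    (Matrix.GeneralLinearGroup.det (n := Fin 2) (R := F)).ker where
  toFun A := ⟨SpecialLinearGroup.toGL A, by
    ext
    simp [Matrix.GeneralLinearGroup.det, SpecialLinearGroup.toGL, A.prop]⟩
  invFun B := ⟨B.1.val, by
    have h := congrArg Units.val B.2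
    simpa [Matrix.GeneralLinearGroup.det] using h⟩
  left_inv A := by ext i j; rfl
  right_inv B := by ext i j; rfl

lemma det_surj : Function.Surjective (Matrix.GeneralLinearGroup.det (n := Fin 2) (R := F)) := by
  intro u
  refine ⟨Matrix.GeneralLinearGroup.mkOfDetNeZero (Matrix.diagonal ![(u : F), 1]) ?_, ?_⟩
  · simp [Matrix.det_diagonal, Fin.prod_univ_two]
  · ext
    simp [Matrix.GeneralLinearGroup.mkOfDetNeZero, Matrix.GeneralLinearGroup.mk',
      Matrix.unitOfDetInvertible, Matrix.det_diagonal, Fin.prod_univ_two]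

lemma nat_aux {q : ℕ} (h : 2 ≤ q) :
    (q ^ 2 - 1) * (q ^ 2 - q) = (q - 1) * (q * (q ^ 2 - 1)) := by
  obtain ⟨m, rfl⟩ : ∃ m, q = m + 2 := ⟨q - 2, by omega⟩
  have e1 : (m + 2) ^ 2 - 1 = (m + 1) * (m + 3) := by ring_nf; omega
  have e2 : (m + 2) ^ 2 - (m + 2) = (m + 2) * (m + 1) := by ring_nf; omega
  have e3 : m + 2 - 1 = m + 1 := by omega
  rw [e1, e2, e3]; ring

lemma card_sl2 :
    Nat.card (SpecialLinearGroup (Fin 2) F) =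
      Fintype.card F * (Fintype.card F ^ 2 - 1) := by
  set q := Fintype.card F with hq
  have hq2 : 2 ≤ q := Fintype.one_lt_card
  have hGL : Nat.card (GL (Fin 2) F) = (q ^ 2 - 1) * (q ^ 2 - q) := by
    rw [Matrix.card_GL_field]
    simp [Fin.prod_univ_two]
    rfl
  have hquot : Nat.card (GL (Fin 2) F) =
      Nat.card (GL (Fin 2) F ⧸ (Matrix.GeneralLinearGroup.det (n := Fin 2) (R := F)).ker) *
      Nat.card ((Matrix.GeneralLinearGroup.det (n := Fin 2) (R := F)).ker) :=
    Subgroup.card_eq_card_quotient_mul_card_subgroup _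
  have hunits : Nat.card (GL (Fin 2) F ⧸
      (Matrix.GeneralLinearGroup.det (n := Fin 2) (R := F)).ker) = q - 1 := by
    classical
    rw [Nat.card_congr (QuotientGroup.quotientKerEquivOfSurjective _ (det_surj F)).toEquiv]
    rw [Nat.card_eq_fintype_card, Fintype.card_units, hq]
  have hker : Nat.card ((Matrix.GeneralLinearGroup.det (n := Fin 2) (R := F)).ker) =
      Nat.card (SpecialLinearGroup (Fin 2) F) := (Nat.card_congr (slEquivKer F)).symm
  rw [hunits, hker, hGL] at hquot
  have h1 : 0 < q - 1 := by omega
  apply Nat.eq_of_mul_eq_mul_left h1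
  rw [← hquot]
  exact nat_aux hq2

lemma card_roots_two (hodd : Odd (Fintype.card F)) :
    Nat.card (rootsOfUnity 2 F) = 2 := by
  have hchar : ringChar F ≠ 2 := by
    intro h
    have h2 := FiniteField.even_card_of_char_two h
    rw [Nat.odd_iff] at hodd
    omega
  have hne : (-1 : Fˣ) ≠ 1 := by
    intro h
    apply hchar
    have h1 : ((-1 : Fˣ) : F) = ((1 : Fˣ) : F) := congrArg Units.val h
    simp only [Units.val_neg, Units.val_one] at h1
    have h2 : ((2 : ℕ) : F) = 0 := by push_cast; linear_combination -h1
    have hdvd : ringChar F ∣ 2 := ringChar.dvd h2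
    have hp : (ringChar F).Prime := CharP.char_is_prime F (ringChar F)
    exact (Nat.prime_dvd_prime_iff_eq hp Nat.prime_two).mp hdvd
  have hroots : rootsOfUnity 2 F = Subgroup.zpowers (-1 : Fˣ) := by
    ext u
    rw [mem_rootsOfUnity]
    constructor
    · intro hu
      have h1 : (u : F) * (u : F) = 1 := by
        have := congrArg Units.val hu
        push_cast [sq] at this ⊢
        simpa [pow_two] using this
      rcases mul_self_eq_one_iff.mp h1 with h | h
      · have hu1 : u = 1 := Units.ext h
        rw [hu1]; exact Subgroup.one_mem _
      · have hu1 : u = -1 := Units.ext (by simpa using h)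
        rw [hu1]; exact Subgroup.mem_zpowers _
    · intro hu
      obtain ⟨k, rfl⟩ := Subgroup.mem_zpowers_iff.mp hu
      rw [← zpow_natCast, ← _root_.zpow_mul, mul_comm, _root_.zpow_mul, zpow_natCast]
      norm_num
  rw [hroots, Nat.card_zpowers]
  exact orderOf_eq_prime neg_one_sq hne

end aux

/-- If `F` is a finite field of odd cardinality `q`, then `|PSL₂(F)| = q(q² - 1)/2`. -/
theorem card_psl2 (F : Type*) [Field F] [Fintype F]
    (q : ℕ) (hq : Fintype.card F = q) (hodd : Odd q) :
    Nat.card (Matrix.ProjectiveSpecialLinearGroup (Fin 2) F) = q * (q ^ 2 - 1) / 2 := by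
  have hq2 : 2 ≤ q := hq ▸ Fintype.one_lt_card
  have hSL : Nat.card (SpecialLinearGroup (Fin 2) F) = q * (q ^ 2 - 1) := by
    rw [card_sl2, hq]
  have hcenter : Nat.card (Subgroup.center (SpecialLinearGroup (Fin 2) F)) = 2 := by
    have e := (SpecialLinearGroup.center_equiv_rootsOfUnity' (0 : Fin 2) (R := F)).toEquiv
    rw [Nat.card_congr e]
    simpa using card_roots_two F (hq ▸ hodd)
  have hquot : Nat.card (SpecialLinearGroup (Fin 2) F) =
      Nat.card (Matrix.ProjectiveSpecialLinearGroup (Fin 2) F) *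
      Nat.card (Subgroup.center (SpecialLinearGroup (Fin 2) F)) :=
    Subgroup.card_eq_card_quotient_mul_card_subgroup _
  rw [hSL, hcenter] at hquot
  omega
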